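/- Let d ≥ 2 be an integer, π_1 ∈ ℝ, and set π_i = π_1·(d^i − 1)/(d − 1) for i ≥ 0. Let T : [0,∞) → (ℕ → ℝ) satisfy T_0(t) = 0 for all t ≥ 0 and, for each i ≥ 1, the function t ↦ T_i(t) is differentiable with T_i'(t) = d·T_{i-1}(t) − (d+1)·T_i(t) + T_{i+1}(t). Define Φ(t) = Σ_{i≥1} d^{-i/2}·|T_i(t) − π_i|, and assume Φ(0) < ∞ and that the series defining Φ converges locally uniformly on [0,∞). Then Φ(t) ≤ Φ(0)·e^{−(√d − 1)²·t} for all t ≥ 0; in particular Φ converges to zero exponentially fast. -/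

import Mathlib

open Filter
open Set Topology

lemma lyap_sum_identity (s : ℝ) (hs : s ≠ 0) (a : ℕ → ℝ) (N : ℕ) :
    ∑ i ∈ Finset.range N, (s^(i+1))⁻¹ * (s^2 * a i - (s^2+1) * a (i+1) + a (i+2))
    = (2*s - s^2 - 1) * ∑ i ∈ Finset.range N, (s^(i+1))⁻¹ * a (i+1)
      + s * (s^(N+1))⁻¹ * a (N+1) - s^2 * (s^(N+1))⁻¹ * a N + s * a 0 - a 1 := by
  induction N with
  | zero => simp [pow_one]; field_simp; ring
  | succ n ih =>
      rw [Finset.sum_range_succ, Finset.sum_range_succ, ih]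
      have h1 : (s:ℝ)^(n+1) ≠ 0 := pow_ne_zero _ hs
      have h2 : (s:ℝ)^(n+2) ≠ 0 := pow_ne_zero _ hs
      field_simp
      ring

lemma lyap_slope_abs {f : ℝ → ℝ} {x f' B h₀ : ℝ} (hh₀ : 0 < h₀)
    (hf : HasDerivWithinAt f f' (Set.Ici x) x)
    (hB : ∀ h : ℝ, 0 < h → h ≤ h₀ → |f x + h * f'| ≤ |f x| + h * B)
    {ε : ℝ} (hε : 0 < ε) :
    ∀ᶠ z in 𝓝[>] x, |f z| - |f x| ≤ (z - x) * (B + ε) := by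
  have hslope : Tendsto (slope f x) (𝓝[>] x) (𝓝 f') := by
    refine (hasDerivWithinAt_iff_tendsto_slope.mp hf).mono_left ?_
    apply nhdsWithin_mono
    intro z hz
    exact ⟨Set.mem_Ici.mpr (le_of_lt hz), ne_of_gt hz⟩
  have h1 : ∀ᶠ z in 𝓝[>] x, |slope f x z - f'| < ε :=
    (Metric.tendsto_nhds.mp hslope ε hε).mono fun z hz => by
      simpa [Real.dist_eq] using hz
  have h2 : ∀ᶠ z in 𝓝[>] x, z - x ≤ h₀ := by
    have h2' : ∀ᶠ z in 𝓝 x, z < x + h₀ := eventually_lt_nhds (by linarith)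
    exact (h2'.mono fun z hz => by linarith).filter_mono nhdsWithin_le_nhds
  have h3 : ∀ᶠ z in 𝓝[>] x, x < z := eventually_mem_nhdsWithin
  filter_upwards [h1, h2, h3] with z hz1 hz2 hz3
  have hzx : 0 < z - x := by linarith
  have hfz : f z = f x + (z - x) * slope f x z := by
    rw [slope_def_field]
    field_simp
    ring
  have key : |f z| ≤ |f x| + (z - x) * (B + ε) := by
    calc |f z| = |(f x + (z-x) * f') + (z-x) * (slope f x z - f')| := by rw [hfz]; ring_nf
      _ ≤ |f x + (z-x) * f'| + |(z-x) * (slope f x z - f')| := abs_add_le _ _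
      _ ≤ (|f x| + (z-x) * B) + (z-x) * ε := by
          gcongr
          · exact hB _ hzx hz2
          · rw [abs_mul, abs_of_pos hzx]
            exact mul_le_mul_of_nonneg_left hz1.le hzx.le
      _ = |f x| + (z - x) * (B + ε) := by ring
  linarith

/-- Main Grönwall argument for the weighted ℓ¹ Lyapunov function. -/
lemma lyap_gronwall (s : ℝ) (hs1 : 1 < s) (t : ℝ) (ht : 0 ≤ t) (y : ℝ → ℕ → ℝ)
    (hy0 : ∀ x ∈ Set.Icc (0:ℝ) t, y x 0 = 0)
    (hyd : ∀ (i : ℕ), ∀ x ∈ Set.Icc (0:ℝ) t, HasDerivWithinAt (fun u : ℝ => y u (i+1))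
        (s^2 * y x i - (s^2+1) * y x (i+1) + y x (i+2)) (Set.Ici (0:ℝ)) x)
    (Φ : ℝ → ℝ)
    (hU : TendstoUniformlyOn
      (fun (N : ℕ) (x : ℝ) => ∑ i ∈ Finset.range N, (s ^ (i+1))⁻¹ * |y x (i+1)|)
      Φ atTop (Set.Icc (0:ℝ) t)) :
    Φ t ≤ Φ 0 * Real.exp (-(s-1)^2 * t) := by
  have hs0 : 0 < s := by linarith
  set P : ℕ → ℝ → ℝ :=
    fun N x => ∑ i ∈ Finset.range N, (s ^ (i+1))⁻¹ * |y x (i+1)| with hPdef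
  have hw0 : ∀ i : ℕ, (0:ℝ) < (s ^ (i+1))⁻¹ := fun i => by positivity
  have hterm0 : ∀ (x : ℝ) (i : ℕ), 0 ≤ (s ^ (i+1))⁻¹ * |y x (i+1)| :=
    fun x i => mul_nonneg (hw0 i).le (abs_nonneg _)
  have hHasSum : ∀ x ∈ Set.Icc (0:ℝ) t,
      HasSum (fun i => (s ^ (i+1))⁻¹ * |y x (i+1)|) (Φ x) := by
    intro x hx
    rw [hasSum_iff_tendsto_nat_of_nonneg (hterm0 x)]
    exact hU.tendsto_at hx
  have hPle : ∀ N : ℕ, ∀ x ∈ Set.Icc (0:ℝ) t, P N x ≤ Φ x := fun N x hx =>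
    sum_le_hasSum _ (fun i _ => hterm0 x i) (hHasSum x hx)
  have hPcont : ∀ N, ContinuousOn (P N) (Set.Icc 0 t) := by
    intro N
    apply continuousOn_finset_sum
    intro i _
    apply ContinuousOn.mul continuousOn_const
    apply continuous_abs.comp_continuousOn
    intro x hx
    exact ((hyd i x hx).continuousWithinAt).mono Set.Icc_subset_Ici_self
  have main : ∀ ε : ℝ, 0 < ε → Φ t ≤ gronwallBound (Φ 0) (-(s-1)^2) ε t := by
    intro ε hε
    have hev : ∀ᶠ N in atTop, ∀ x ∈ Set.Icc (0:ℝ) t, Φ x - P N x < ε / s :=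
      (Metric.tendstoUniformlyOn_iff.mp hU (ε/s) (by positivity)).mono
        (fun N h x hx => lt_of_abs_lt (by rw [← Real.dist_eq]; exact h x hx))
    have key : ∀ᶠ N in atTop, P N t ≤ gronwallBound (Φ 0) (-(s-1)^2) ε t := by
      filter_upwards [hev] with N hN
      have hmain := le_gronwallBound_of_liminf_deriv_right_le
        (f := P N)
        (f' := fun x => ∑ i ∈ Finset.range N,
          (s ^ (i+1))⁻¹ * (s^2 * |y x i| - (s^2+1) * |y x (i+1)| + |y x (i+2)|))
        (δ := Φ 0) (K := -(s-1)^2) (ε := ε) (a := 0) (b := t)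
        (hPcont N) ?dini (hPle N 0 ⟨le_rfl, ht⟩) ?bound t ⟨ht, le_rfl⟩
      · rwa [sub_zero] at hmain
      case dini =>
        intro x hx r hr
        have hx' : x ∈ Set.Icc (0:ℝ) t := ⟨hx.1, hx.2.le⟩
        have hr' : (∑ i ∈ Finset.range N,
            (s ^ (i+1))⁻¹ * (s^2 * |y x i| - (s^2+1) * |y x (i+1)| + |y x (i+2)|)) < r := hr
        set W : ℝ := ∑ i ∈ Finset.range N, (s ^ (i+1))⁻¹ with hW
        have hW0 : 0 ≤ W := Finset.sum_nonneg fun i _ => (hw0 i).le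
        set F' : ℝ := ∑ i ∈ Finset.range N,
          (s ^ (i+1))⁻¹ * (s^2 * |y x i| - (s^2+1) * |y x (i+1)| + |y x (i+2)|) with hF'
        have hε' : 0 < (r - F') / (W + 1) := by
          apply div_pos (by linarith) (by linarith)
        set ε' : ℝ := (r - F') / (W + 1) with hε'def
        have hall : ∀ᶠ z in 𝓝[>] x, ∀ i ∈ Finset.range N,
            |y z (i+1)| - |y x (i+1)| ≤ (z - x) *
              ((s^2 * |y x i| - (s^2+1) * |y x (i+1)| + |y x (i+2)|) + ε') := by
          rw [eventually_all_finset]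
          intro i _
          apply lyap_slope_abs (h₀ := (s^2+1)⁻¹) (by positivity)
            (((hyd i x hx').mono (Set.Ici_subset_Ici.mpr hx.1))) ?_ hε'
          intro h hh0 hh1
          have hcoef : 0 ≤ 1 - (s^2+1) * h := by
            have h2 : (s^2+1) * h ≤ (s^2+1) * (s^2+1)⁻¹ :=
              mul_le_mul_of_nonneg_left hh1 (by positivity)
            rw [mul_inv_cancel₀ (by positivity)] at h2
            linarith
          have heq : y x (i+1) + h * (s^2 * y x i - (s^2+1) * y x (i+1) + y x (i+2))
              = ((1 - (s^2+1)*h) * y x (i+1) + (h * s^2) * y x i) + h * y x (i+2) := by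
            ring
          calc |y x (i+1) + h * (s^2 * y x i - (s^2+1) * y x (i+1) + y x (i+2))|
              = |((1 - (s^2+1)*h) * y x (i+1) + (h * s^2) * y x i) + h * y x (i+2)| := by
                rw [heq]
            _ ≤ |(1 - (s^2+1)*h) * y x (i+1)| + |(h * s^2) * y x i| + |h * y x (i+2)| :=
                (abs_add_le _ _).trans (add_le_add_left (abs_add_le _ _) _)
            _ = (1 - (s^2+1)*h) * |y x (i+1)| + (h * s^2) * |y x i| + h * |y x (i+2)| := by
                simp only [abs_mul, abs_of_nonneg hcoef, abs_of_pos hh0,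
                  abs_of_nonneg (sq_nonneg s), abs_sq]
            _ = |y x (i+1)| + h * (s^2 * |y x i| - (s^2+1) * |y x (i+1)| + |y x (i+2)|) := by
                ring
        have hgt : ∀ᶠ z in 𝓝[>] x, x < z := eventually_mem_nhdsWithin
        refine ((hall.and hgt).mono ?_).frequently
        rintro z ⟨hz1, hz2⟩
        have hzx : 0 < z - x := by linarith
        have hsum : P N z - P N x ≤ (z - x) * (F' + ε' * W) := by
          have e1 : P N z - P N x = ∑ i ∈ Finset.range N,
              (s ^ (i+1))⁻¹ * (|y z (i+1)| - |y x (i+1)|) := by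
            rw [hPdef]
            rw [← Finset.sum_sub_distrib]
            exact Finset.sum_congr rfl fun i _ => by ring
          have e2 : (∑ i ∈ Finset.range N,
              (s ^ (i+1))⁻¹ * ((z - x) *
                ((s^2 * |y x i| - (s^2+1) * |y x (i+1)| + |y x (i+2)|) + ε')))
              = (z - x) * (F' + ε' * W) := by
            calc (∑ i ∈ Finset.range N,
                (s ^ (i+1))⁻¹ * ((z - x) *
                  ((s^2 * |y x i| - (s^2+1) * |y x (i+1)| + |y x (i+2)|) + ε')))
                = ∑ i ∈ Finset.range N,
                  ((z - x) * ((s ^ (i+1))⁻¹ *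
                    (s^2 * |y x i| - (s^2+1) * |y x (i+1)| + |y x (i+2)|))
                   + ((z - x) * ε') * (s ^ (i+1))⁻¹) :=
                  Finset.sum_congr rfl fun i _ => by ring
              _ = (z - x) * F' + ((z - x) * ε') * W := by
                  rw [Finset.sum_add_distrib, ← Finset.mul_sum, ← Finset.mul_sum, ← hF', ← hW]
              _ = (z - x) * (F' + ε' * W) := by ring
          rw [e1, ← e2]
          exact Finset.sum_le_sum fun i hi =>
            mul_le_mul_of_nonneg_left (hz1 i hi) (hw0 i).le
        have hlt : F' + ε' * W < r := by
          have : ε' * (W + 1) = r - F' := by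
            rw [hε'def]
            field_simp
          nlinarith
        rw [inv_mul_lt_iff₀ hzx]  -- may need different name
        calc P N z - P N x ≤ (z - x) * (F' + ε' * W) := hsum
          _ < (z - x) * r := by
              exact mul_lt_mul_of_pos_left hlt hzx
      case bound =>
        intro x hx
        have hx' : x ∈ Set.Icc (0:ℝ) t := ⟨hx.1, hx.2.le⟩
        have hid := lyap_sum_identity s (ne_of_gt hs0) (fun i => |y x i|) N
        have ha0 : |y x 0| = 0 := by rw [hy0 x hx']; simp
        have htail : (s ^ (N+1))⁻¹ * |y x (N+1)| ≤ ε / s := by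
          have h1 : P (N+1) x ≤ Φ x := hPle (N+1) x hx'
          have h2 : P (N+1) x = P N x + (s ^ (N+1))⁻¹ * |y x (N+1)| := by
            rw [hPdef]
            exact Finset.sum_range_succ _ N
          have h3 := hN x hx'
          linarith
        have htail' : s * ((s ^ (N+1))⁻¹ * |y x (N+1)|) ≤ ε := by
          have := mul_le_mul_of_nonneg_left htail hs0.le
          rwa [mul_div_cancel₀ ε (ne_of_gt hs0)] at this
        show (∑ i ∈ Finset.range N,
            (s ^ (i+1))⁻¹ * (s^2 * |y x i| - (s^2+1) * |y x (i+1)| + |y x (i+2)|))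
            ≤ -(s-1)^2 * P N x + ε
        rw [hid]
        have hKeq : 2*s - s^2 - 1 = -(s-1)^2 := by ring
        have hnn1 : 0 ≤ s^2 * (s ^ (N+1))⁻¹ * |y x N| := by positivity
        have hnn2 : 0 ≤ |y x 1| := abs_nonneg _
        have hPform : P N x = ∑ i ∈ Finset.range N, (s ^ (i+1))⁻¹ * |y x (i+1)| := by
          rw [hPdef]
        rw [← hPform] at *
        nlinarith [htail']
    have hPt : Tendsto (fun N => P N t) atTop (𝓝 (Φ t)) := hU.tendsto_at ⟨ht, le_rfl⟩
    exact le_of_tendsto hPt key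
  have hlim : Tendsto (fun e => gronwallBound (Φ 0) (-(s-1)^2) e t) (𝓝[>] (0:ℝ))
      (𝓝 (gronwallBound (Φ 0) (-(s-1)^2) 0 t)) :=
    ((gronwallBound_continuous_ε (Φ 0) (-(s-1)^2) t).tendsto 0).mono_left nhdsWithin_le_nhds
  have hfin : Φ t ≤ gronwallBound (Φ 0) (-(s-1)^2) 0 t :=
    ge_of_tendsto hlim (eventually_nhdsWithin_of_forall fun e he => main e he)
  rwa [gronwallBound_ε0] at hfin

/-- Exponential decay of the Lyapunov function `Φ(t) = Σ_{i≥1} d^{-i/2} |T_i(t) − π_i|`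
for the limiting linear system `T_0 ≡ 0`, `T_i' = d·T_{i-1} − (d+1)·T_i + T_{i+1}` (`i ≥ 1`),
where `π_i = π_1 (d^i − 1)/(d−1)` is the fixed point:
`Φ(t) ≤ Φ(0)·e^{−(√d − 1)² t}` for all `t ≥ 0`. -/
theorem lyapunov_exponential_decay (d : ℕ) (hd : 2 ≤ d) (π₁ : ℝ) (π : ℕ → ℝ)
    (hπ : ∀ i : ℕ, π i = π₁ * ((d : ℝ) ^ i - 1) / ((d : ℝ) - 1))
    (T : ℝ → ℕ → ℝ)
    (hT0 : ∀ t : ℝ, 0 ≤ t → T t 0 = 0)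
    (hderiv : ∀ (i : ℕ) (t : ℝ), 0 ≤ t →
      HasDerivWithinAt (fun s : ℝ => T s (i + 1))
        ((d : ℝ) * T t i - ((d : ℝ) + 1) * T t (i + 1) + T t (i + 2))
        (Set.Ici (0 : ℝ)) t)
    (Φ : ℝ → ℝ)
    (hΦ : ∀ t : ℝ, Φ t = ∑' i : ℕ,
      (Real.sqrt d ^ (i + 1))⁻¹ * |T t (i + 1) - π (i + 1)|)
    (hΦ0 : Summable (fun i : ℕ =>
      (Real.sqrt d ^ (i + 1))⁻¹ * |T 0 (i + 1) - π (i + 1)|))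
    (hloc : TendstoLocallyUniformlyOn
      (fun (N : ℕ) (t : ℝ) => ∑ i ∈ Finset.range N,
        (Real.sqrt d ^ (i + 1))⁻¹ * |T t (i + 1) - π (i + 1)|)
      Φ atTop (Set.Ici (0 : ℝ))) :
    ∀ t : ℝ, 0 ≤ t → Φ t ≤ Φ 0 * Real.exp (-(Real.sqrt d - 1) ^ 2 * t) := by
  intro t ht
  have hD2 : (2:ℝ) ≤ (d:ℝ) := by exact_mod_cast hd
  have hD0 : (0:ℝ) ≤ (d:ℝ) := by linarith
  have hs1 : 1 < Real.sqrt d := by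
    rw [show (1:ℝ) = Real.sqrt 1 from Real.sqrt_one.symm]
    exact Real.sqrt_lt_sqrt (by norm_num) (by linarith)
  have hss : Real.sqrt d ^ 2 = (d:ℝ) := Real.sq_sqrt hD0
  have hD1 : (d:ℝ) - 1 ≠ 0 := by linarith
  have hπ0 : π 0 = 0 := by rw [hπ 0]; simp
  have hπfix : ∀ i : ℕ, (d:ℝ) * π i - ((d:ℝ)+1) * π (i+1) + π (i+2) = 0 := by
    intro i
    rw [hπ i, hπ (i+1), hπ (i+2)]
    field_simp
    ring
  apply lyap_gronwall (Real.sqrt d) hs1 t ht (fun x i => T x i - π i)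
  · intro x hx
    rw [hT0 x hx.1, hπ0, sub_zero]
  · intro i x hx
    have h := (hderiv i x hx.1).sub_const (π (i+1))
    convert h using 1
    case e'_4 => rfl
    case e'_5 => rfl
    rw [hss]
    have := hπfix i
    push_cast
    ring_nf
    ring_nf at this
    linarith
  · exact (tendstoLocallyUniformlyOn_iff_tendstoUniformlyOn_of_compact isCompact_Icc).mp
      (hloc.mono Set.Icc_subset_Ici_self)
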